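/- Let r > 1 be an integer, n ≥ 0 an integer, {X_j, j ≥ 1} real random variables with E|X_j| < ∞, and {b_n} a nondecreasing sequence of positive constants. For b > 0 write X'_{j,b} = g_b(X_j) and, for 0 < L ≤ K, X''_{j,L,K} = h_{L,K}(X_j); set S_{m,b} = Σ_{j=1}^{m} (X'_{j,b} − E X'_{j,b}). Then, pointwise on the sample space: max_{1 ≤ m < r^{n+1}} |S_{m, b_{r^{n+1}}}| ≤ Σ_{k=1}^{n+1} max_{1 ≤ ℓ ≤ r−1} max_{0 ≤ h < r^{n−k+1}} | Σ_{j=1+h r^k}^{h r^k + ℓ r^{k−1}} (X'_{j, b_{r^{k−1}}} − E X'_{j, b_{r^{k−1}}}) | + Σ_{k=1}^{n+1} max_{0 ≤ h < r^{n−k+1}} | Σ_{j=1+h r^k}^{h r^k + r^k} (X''_{j, b_{r^{k−1}}, b_{r^k}} − E X''_{j, b_{r^{k−1}}, b_{r^k}}) | + 2 Σ_{k=1}^{n+1} max_{0 ≤ h < r^{n−k+1}} Σ_{j=1+h r^k}^{h r^k + r^k} E[|X_j| 1{|X_j| > b_{r^{k−1}}}]. -/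

import Mathlib

open MeasureTheory Finset Filter

noncomputable section

variable {Ω : Type*} [MeasurableSpace Ω]

/-- Truncation at level `L`: `g_L(t) = max (-L) (min t L)`. -/
def gtr (L t : ℝ) : ℝ := max (-L) (min t L)

/-- `h_{L,K}(t) = |g_K(t) - g_L(t)|`. -/
def htr (L K t : ℝ) : ℝ := |gtr K t - gtr L t|

/-- Covariance `Cov(U,V) = E[UV] - E[U] E[V]`. -/
def cov (μ : Measure Ω) (U V : Ω → ℝ) : ℝ :=
  (∫ ω, U ω * V ω ∂μ) - (∫ ω, U ω ∂μ) * (∫ ω, V ω ∂μ)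

/-- `G_{X,Y}(L) = Cov(g_L(X), g_L(Y))`. -/
def Gcov (μ : Measure Ω) (X Y : Ω → ℝ) (L : ℝ) : ℝ :=
  cov μ (fun ω => gtr L (X ω)) (fun ω => gtr L (Y ω))

/-- `H_{X,Y}(L,K) = Cov(h_{L,K}(X), h_{L,K}(Y))`. -/
def Hcov (μ : Measure Ω) (X Y : Ω → ℝ) (L K : ℝ) : ℝ :=
  cov μ (fun ω => htr L K (X ω)) (fun ω => htr L K (Y ω))

/-- Maximum of `f 0, f 1, ..., f N`. -/
def fmax (N : ℕ) (f : ℕ → ℝ) : ℝ :=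
  (Finset.range (N + 1)).sup' Finset.nonempty_range_add_one f

/-- Sum over pairs `a ≤ i < j ≤ b` of `f i j`. -/
def pairSum (a b : ℕ) (f : ℕ → ℕ → ℝ) : ℝ :=
  ∑ i ∈ Finset.Icc a b, ∑ j ∈ Finset.Icc (i + 1) b, f i j

/-- `{X_n}` is stochastically dominated by `Y`. -/
def StochDom (μ : Measure Ω) (X : ℕ → Ω → ℝ) (Y : Ω → ℝ) : Prop :=
  ∃ C : ℝ, 0 < C ∧ ∀ n : ℕ, 1 ≤ n → ∀ t : ℝ, 0 < t →
    μ {ω | t < |X n ω|} ≤ ENNReal.ofReal C * μ {ω | t < |Y ω|}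

lemma le_fmax {N i : ℕ} (h : i ≤ N) (f : ℕ → ℝ) : f i ≤ fmax N f :=
  Finset.le_sup' f (Finset.mem_range.2 (by omega))

lemma fmax_le {N : ℕ} {f : ℕ → ℝ} {c : ℝ} (h : ∀ i, i ≤ N → f i ≤ c) : fmax N f ≤ c :=
  Finset.sup'_le _ _ fun i hi => h i (by simpa using Nat.lt_succ_iff.mp (Finset.mem_range.mp hi))

lemma fmax_zero (f : ℕ → ℝ) : fmax 0 f = f 0 := by simp [fmax]

lemma fmax_abs_nonneg (N : ℕ) (g : ℕ → ℝ) : 0 ≤ fmax N (fun i => |g i|) :=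
  le_trans (abs_nonneg (g 0)) (le_fmax (Nat.zero_le N) (fun i => |g i|))

lemma fmax_nonneg {N : ℕ} {f : ℕ → ℝ} (h : ∀ i, 0 ≤ f i) : 0 ≤ fmax N f :=
  le_trans (h 0) (le_fmax (Nat.zero_le N) f)

lemma gtr_abs_le {L : ℝ} (hL : 0 ≤ L) (t : ℝ) : |gtr L t| ≤ L := by
  rw [abs_le]
  constructor
  · exact le_max_left _ _
  · exact max_le (by linarith) (min_le_right _ _)

lemma measurable_gtr {X : Ω → ℝ} (hX : Measurable X) (L : ℝ) :
    Measurable (fun ω => gtr L (X ω)) :=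
  Measurable.max measurable_const ((hX.min measurable_const))

lemma integrable_gtr {μ : Measure Ω} [IsProbabilityMeasure μ] {X : Ω → ℝ}
    (hX : Measurable X) {L : ℝ} (hL : 0 ≤ L) :
    Integrable (fun ω => gtr L (X ω)) μ :=
  (integrable_const L).mono' (measurable_gtr hX L).aestronglyMeasurable
    (ae_of_all _ fun ω => by simpa using gtr_abs_le hL (X ω))

lemma htr_nonneg (L K t : ℝ) : 0 ≤ htr L K t := abs_nonneg _

lemma measurable_htr {X : Ω → ℝ} (hX : Measurable X) (L K : ℝ) :
    Measurable (fun ω => htr L K (X ω)) :=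
  ((measurable_gtr hX K).sub (measurable_gtr hX L)).abs

lemma integrable_htr {μ : Measure Ω} [IsProbabilityMeasure μ] {X : Ω → ℝ}
    (hX : Measurable X) {L K : ℝ} (hL : 0 ≤ L) (hK : 0 ≤ K) :
    Integrable (fun ω => htr L K (X ω)) μ :=
  (integrable_const (K + L)).mono' (measurable_htr hX L K).aestronglyMeasurable
    (ae_of_all _ fun ω => by
      have h1 := gtr_abs_le hK (X ω)
      have h2 := gtr_abs_le hL (X ω)
      simp only [htr, Real.norm_eq_abs, abs_abs]
      calc |gtr K (X ω) - gtr L (X ω)| ≤ |gtr K (X ω)| + |gtr L (X ω)| := abs_sub _ _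
      _ ≤ K + L := by linarith)

lemma htr_le_ite {L K : ℝ} (hL : 0 < L) (hLK : L ≤ K) (t : ℝ) :
    htr L K t ≤ if L < |t| then |t| else 0 := by
  unfold htr gtr
  split_ifs with h
  · rcases abs_cases t with ⟨h1, h2⟩ | ⟨h1, h2⟩ <;>
    · rw [abs_le]
      constructor <;>
      · simp only [min_def, max_def]
        split_ifs <;> linarith
  · push_neg at h
    rw [abs_le] at h
    have e1 : min t K = t := min_eq_left (by linarith)
    have e2 : min t L = t := min_eq_left (by linarith)
    rw [e1, e2, max_eq_right (by linarith : -K ≤ t), max_eq_right (by linarith : -L ≤ t)]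
    simp

lemma integral_htr_le {μ : Measure Ω} [IsProbabilityMeasure μ] {X : Ω → ℝ}
    (hX : Measurable X) (hXi : Integrable X μ) {L K : ℝ} (hL : 0 < L) (hLK : L ≤ K) :
    ∫ x, htr L K (X x) ∂μ ≤ ∫ x in {x | L < |X x|}, |X x| ∂μ := by
  have hset : MeasurableSet {x | L < |X x|} := measurableSet_lt measurable_const hX.abs
  have hind : Integrable ({x | L < |X x|}.indicator (fun x => |X x|)) μ :=
    hXi.abs.indicator hset
  have hle : ∀ x, htr L K (X x) ≤ {x | L < |X x|}.indicator (fun x => |X x|) x := by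
    intro x
    rw [Set.indicator_apply]
    simpa using htr_le_ite hL hLK (X x)
  calc ∫ x, htr L K (X x) ∂μ
      ≤ ∫ x, {x | L < |X x|}.indicator (fun x => |X x|) x ∂μ :=
        integral_mono (integrable_htr hX hL.le (hL.trans_le hLK).le) hind hle
    _ = ∫ x in {x | L < |X x|}, |X x| ∂μ := integral_indicator hset

lemma keyA {μ : Measure Ω} [IsProbabilityMeasure μ] (X : ℕ → Ω → ℝ) {L K : ℝ}
    (hL : 0 < L) (hLK : L ≤ K) (s t : Finset ℕ) (hst : s ⊆ t)
    (hmeas : ∀ j ∈ t, Measurable (X j)) (hint : ∀ j ∈ t, Integrable (X j) μ) (ω : Ω) :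
    |∑ j ∈ s, (gtr K (X j ω) - ∫ x, gtr K (X j x) ∂μ)| ≤
      |∑ j ∈ s, (gtr L (X j ω) - ∫ x, gtr L (X j x) ∂μ)|
      + |∑ j ∈ t, (htr L K (X j ω) - ∫ x, htr L K (X j x) ∂μ)|
      + 2 * ∑ j ∈ t, ∫ x in {x | L < |X j x|}, |X j x| ∂μ := by
  have hK : 0 < K := hL.trans_le hLK
  set EH : ℕ → ℝ := fun j => ∫ x, htr L K (X j x) ∂μ with hEH
  have hEHnn : ∀ j ∈ t, 0 ≤ EH j := fun j hj =>
    integral_nonneg fun x => htr_nonneg L K (X j x)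
  have hEHle : ∀ j ∈ t, EH j ≤ ∫ x in {x | L < |X j x|}, |X j x| ∂μ := fun j hj =>
    integral_htr_le (hmeas j hj) (hint j hj) hL hLK
  -- difference of centered truncated sums
  have hdiff : ∀ j ∈ t,
      (gtr K (X j ω) - ∫ x, gtr K (X j x) ∂μ) - (gtr L (X j ω) - ∫ x, gtr L (X j x) ∂μ)
        = (gtr K (X j ω) - gtr L (X j ω)) - ∫ x, (gtr K (X j x) - gtr L (X j x)) ∂μ := by
    intro j hj
    rw [integral_sub (integrable_gtr (hmeas j hj) hK.le) (integrable_gtr (hmeas j hj) hL.le)]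
    ring
  have habsint : ∀ j ∈ t, |∫ x, (gtr K (X j x) - gtr L (X j x)) ∂μ| ≤ EH j := by
    intro j hj
    calc |∫ x, (gtr K (X j x) - gtr L (X j x)) ∂μ|
        ≤ ∫ x, |gtr K (X j x) - gtr L (X j x)| ∂μ := by
          simpa [Real.norm_eq_abs] using
            norm_integral_le_integral_norm (fun x => gtr K (X j x) - gtr L (X j x)) (μ := μ)
      _ = EH j := rfl
  -- step 1 : split off the difference
  have h1 : |∑ j ∈ s, (gtr K (X j ω) - ∫ x, gtr K (X j x) ∂μ)| ≤
      |∑ j ∈ s, (gtr L (X j ω) - ∫ x, gtr L (X j x) ∂μ)|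
      + |∑ j ∈ s, ((gtr K (X j ω) - ∫ x, gtr K (X j x) ∂μ)
          - (gtr L (X j ω) - ∫ x, gtr L (X j x) ∂μ))| := by
    have := abs_add_le (∑ j ∈ s, (gtr L (X j ω) - ∫ x, gtr L (X j x) ∂μ))
      (∑ j ∈ s, ((gtr K (X j ω) - ∫ x, gtr K (X j x) ∂μ)
          - (gtr L (X j ω) - ∫ x, gtr L (X j x) ∂μ)))
    rw [← Finset.sum_add_distrib] at this
    simpa using this
  -- bound the difference sum
  have h2 : |∑ j ∈ s, ((gtr K (X j ω) - ∫ x, gtr K (X j x) ∂μ)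
          - (gtr L (X j ω) - ∫ x, gtr L (X j x) ∂μ))| ≤
      ∑ j ∈ s, (htr L K (X j ω) - EH j) + 2 * ∑ j ∈ s, EH j := by
    calc |∑ j ∈ s, ((gtr K (X j ω) - ∫ x, gtr K (X j x) ∂μ)
          - (gtr L (X j ω) - ∫ x, gtr L (X j x) ∂μ))|
        ≤ ∑ j ∈ s, |(gtr K (X j ω) - ∫ x, gtr K (X j x) ∂μ)
          - (gtr L (X j ω) - ∫ x, gtr L (X j x) ∂μ)| := Finset.abs_sum_le_sum_abs _ _
      _ ≤ ∑ j ∈ s, (htr L K (X j ω) + EH j) := by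
          apply Finset.sum_le_sum
          intro j hj
          rw [hdiff j (hst hj)]
          calc |(gtr K (X j ω) - gtr L (X j ω)) - ∫ x, (gtr K (X j x) - gtr L (X j x)) ∂μ|
              ≤ |gtr K (X j ω) - gtr L (X j ω)| + |∫ x, (gtr K (X j x) - gtr L (X j x)) ∂μ| :=
                abs_sub _ _
            _ ≤ htr L K (X j ω) + EH j := by
                have := habsint j (hst hj); unfold htr; linarith
      _ = ∑ j ∈ s, (htr L K (X j ω) - EH j) + 2 * ∑ j ∈ s, EH j := by
          rw [Finset.sum_sub_distrib, Finset.sum_add_distrib]; ring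
  -- extend the centered htr sum from s to t
  have h3 : ∑ j ∈ s, (htr L K (X j ω) - EH j) ≤
      |∑ j ∈ t, (htr L K (X j ω) - EH j)| + ∑ j ∈ t \ s, EH j := by
    have hsplit : ∑ j ∈ t, (htr L K (X j ω) - EH j)
        = ∑ j ∈ s, (htr L K (X j ω) - EH j) + ∑ j ∈ t \ s, (htr L K (X j ω) - EH j) := by
      rw [← Finset.sum_union (Finset.disjoint_sdiff)]
      congr 1
      rw [Finset.union_sdiff_of_subset hst]
    have hge : -(∑ j ∈ t \ s, EH j) ≤ ∑ j ∈ t \ s, (htr L K (X j ω) - EH j) := by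
      rw [← Finset.sum_neg_distrib]
      apply Finset.sum_le_sum
      intro j hj
      have := htr_nonneg L K (X j ω); linarith
    have := le_abs_self (∑ j ∈ t, (htr L K (X j ω) - EH j))
    linarith [hsplit]
  have h4 : ∑ j ∈ t \ s, EH j + 2 * ∑ j ∈ s, EH j ≤ 2 * ∑ j ∈ t, EH j := by
    have e : ∑ j ∈ t, EH j = ∑ j ∈ s, EH j + ∑ j ∈ t \ s, EH j := by
      rw [← Finset.sum_union (Finset.disjoint_sdiff), Finset.union_sdiff_of_subset hst]
    have : (0:ℝ) ≤ ∑ j ∈ t \ s, EH j :=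
      Finset.sum_nonneg fun j hj => hEHnn j (Finset.mem_sdiff.mp hj).1
    linarith
  have h5 : ∑ j ∈ t, EH j ≤ ∑ j ∈ t, ∫ x in {x | L < |X j x|}, |X j x| ∂μ :=
    Finset.sum_le_sum hEHle
  have hS : ∑ j ∈ s, EH j ≤ ∑ j ∈ t, EH j :=
    Finset.sum_le_sum_of_subset_of_nonneg hst fun j hj _ => hEHnn j hj
  linarith

lemma sum_Icc_split (f : ℕ → ℝ) {a b c : ℕ} (h1 : a ≤ b) (h2 : b ≤ c) :
    ∑ j ∈ Finset.Icc (a+1) c, f j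
      = ∑ j ∈ Finset.Icc (a+1) b, f j + ∑ j ∈ Finset.Icc (b+1) c, f j := by
  rw [← Finset.Ico_add_one_right_eq_Icc, ← Finset.Ico_add_one_right_eq_Icc, ← Finset.Ico_add_one_right_eq_Icc]
  exact (Finset.sum_Ico_consecutive f (by omega) (by omega)).symm

lemma aux_bound (μ : Measure Ω) [IsProbabilityMeasure μ] (r : ℕ) (hr : 1 < r)
    (X : ℕ → Ω → ℝ) (hXmeas : ∀ j : ℕ, 1 ≤ j → Measurable (X j))
    (hXint : ∀ j : ℕ, 1 ≤ j → Integrable (X j) μ)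
    (b : ℕ → ℝ) (hbpos : ∀ m : ℕ, 1 ≤ m → 0 < b m)
    (hbmono : ∀ m k : ℕ, 1 ≤ m → m ≤ k → b m ≤ b k) (ω : Ω) :
    ∀ n H t : ℕ, 1 ≤ t → t < r ^ (n+1) →
    |∑ j ∈ Finset.Icc (H * r^(n+1) + 1) (H * r^(n+1) + t),
        (gtr (b (r^(n+1))) (X j ω) - ∫ x, gtr (b (r^(n+1))) (X j x) ∂μ)|
    ≤ (∑ k ∈ Finset.Icc 1 (n+1), fmax (r-2) (fun l => fmax (r^(n+1-k) - 1) (fun i =>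
         |∑ j ∈ Finset.Icc (1 + (H * r^(n+1-k) + i) * r^k)
              ((H * r^(n+1-k) + i) * r^k + (l+1) * r^(k-1)),
            (gtr (b (r^(k-1))) (X j ω) - ∫ x, gtr (b (r^(k-1))) (X j x) ∂μ)|)))
      + (∑ k ∈ Finset.Icc 1 (n+1), fmax (r^(n+1-k) - 1) (fun i =>
         |∑ j ∈ Finset.Icc (1 + (H * r^(n+1-k) + i) * r^k)
              ((H * r^(n+1-k) + i) * r^k + r^k),
            (htr (b (r^(k-1))) (b (r^k)) (X j ω)
              - ∫ x, htr (b (r^(k-1))) (b (r^k)) (X j x) ∂μ)|))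
      + 2 * ∑ k ∈ Finset.Icc 1 (n+1), fmax (r^(n+1-k) - 1) (fun i =>
         ∑ j ∈ Finset.Icc (1 + (H * r^(n+1-k) + i) * r^k)
              ((H * r^(n+1-k) + i) * r^k + r^k),
            ∫ x in {x | b (r^(k-1)) < |X j x|}, |X j x| ∂μ) := by
  have hb0 : (0:ℝ) < b 1 := hbpos 1 le_rfl
  have hbLK : ∀ p : ℕ, b (r ^ p) ≤ b (r ^ (p+1)) := fun p =>
    hbmono _ _ (Nat.one_le_pow _ _ (by omega)) (Nat.pow_le_pow_right (by omega) (by omega))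
  have hbp : ∀ p : ℕ, 0 < b (r ^ p) := fun p => hbpos _ (Nat.one_le_pow _ _ (by omega))
  intro n
  induction n with
  | zero =>
    intro H t ht1 ht2
    simp only [pow_one, zero_add] at ht2 ⊢
    have key := keyA X (hbp 0) (by simpa using hbLK 0)
      (Finset.Icc (H * r + 1) (H * r + t)) (Finset.Icc (H * r + 1) (H * r + r))
      (Finset.Icc_subset_Icc le_rfl (by omega))
      (fun j hj => hXmeas j (by have := (Finset.mem_Icc.mp hj).1; omega))
      (fun j hj => hXint j (by have := (Finset.mem_Icc.mp hj).1; omega)) ω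
    simp only [Finset.Icc_self, Finset.sum_singleton]
    have e1 : (1:ℕ) - 1 = 0 := rfl
    simp only [e1, pow_zero, pow_one, Nat.sub_self, fmax_zero, one_mul, mul_one]
    calc |∑ j ∈ Finset.Icc (H * r + 1) (H * r + t),
            (gtr (b r) (X j ω) - ∫ x, gtr (b r) (X j x) ∂μ)|
        ≤ |∑ j ∈ Finset.Icc (H * r + 1) (H * r + t),
            (gtr (b 1) (X j ω) - ∫ x, gtr (b 1) (X j x) ∂μ)|
          + |∑ j ∈ Finset.Icc (H * r + 1) (H * r + r),
              (htr (b 1) (b r) (X j ω) - ∫ x, htr (b 1) (b r) (X j x) ∂μ)|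
          + 2 * ∑ j ∈ Finset.Icc (H * r + 1) (H * r + r),
              ∫ x in {x | b 1 < |X j x|}, |X j x| ∂μ := by
            simpa [pow_zero, pow_one] using key
      _ ≤ _ := by
          simp only [mul_one, add_zero]
          have hle : |∑ j ∈ Finset.Icc (1 + H * r) (H * r + t),
              (gtr (b 1) (X j ω) - ∫ x, gtr (b 1) (X j x) ∂μ)|
            ≤ fmax (r-2) (fun l =>
              |∑ j ∈ Finset.Icc (1 + H * r) (H * r + (l+1)),
                (gtr (b 1) (X j ω) - ∫ x, gtr (b 1) (X j x) ∂μ)|) := by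
            have := le_fmax (show t - 1 ≤ r - 2 by omega)
              (fun l => |∑ j ∈ Finset.Icc (1 + H * r) (H * r + (l+1)),
                (gtr (b 1) (X j ω) - ∫ x, gtr (b 1) (X j x) ∂μ)|)
            have et : t - 1 + 1 = t := by omega
            simp only [et] at this
            exact this
          rw [show H * r + 1 = 1 + H * r by ring]
          gcongr <;> linarith [hle]
  | succ n ih =>
    intro H t ht1 ht2
    have hNpos : 0 < r ^ (n+1) := Nat.pow_pos (by omega)
    have hq : t / r ^ (n+1) < r := by
      apply (Nat.div_lt_iff_lt_mul hNpos).mpr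
      calc t < r ^ (n+1+1) := ht2
        _ = r * r ^ (n+1) := by rw [pow_succ]; ring
    have hs : t % r ^ (n+1) < r ^ (n+1) := Nat.mod_lt _ hNpos
    have hdm : r ^ (n+1) * (t / r ^ (n+1)) + t % r ^ (n+1) = t := Nat.div_add_mod t _
    set q := t / r ^ (n+1) with hqdef
    set s := t % r ^ (n+1) with hsdef
    clear_value q s
    -- clean up the goal : split off the top term k = n+2 in each of the three sums
    rw [Finset.sum_Icc_succ_top (by omega : 1 ≤ n+1+1),
        Finset.sum_Icc_succ_top (by omega : 1 ≤ n+1+1),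
        Finset.sum_Icc_succ_top (by omega : 1 ≤ n+1+1)]
    simp only [Nat.add_sub_cancel, Nat.sub_self, pow_zero, fmax_zero, mul_one, add_zero,
      Nat.add_comm 1 (H * r ^ (n+1+1))]
    -- key truncation swap
    have hjmem : ∀ j ∈ Finset.Icc (H * r^(n+1+1) + 1) (H * r^(n+1+1) + r^(n+1+1)), 1 ≤ j :=
      fun j hj => by have := (Finset.mem_Icc.mp hj).1; omega
    have key := keyA X (hbp (n+1)) (hbLK (n+1))
      (Finset.Icc (H * r^(n+1+1) + 1) (H * r^(n+1+1) + t))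
      (Finset.Icc (H * r^(n+1+1) + 1) (H * r^(n+1+1) + r^(n+1+1)))
      (Finset.Icc_subset_Icc le_rfl (by omega))
      (fun j hj => hXmeas j (hjmem j hj)) (fun j hj => hXint j (hjmem j hj)) ω
    -- split the middle-truncation sum at q * r^(n+1)
    have hqN : q * r ^ (n+1) ≤ t := by
      rw [← hdm, mul_comm]; exact Nat.le_add_right _ _
    have hsplit : ∑ j ∈ Finset.Icc (H * r^(n+1+1) + 1) (H * r^(n+1+1) + t),
          (gtr (b (r^(n+1))) (X j ω) - ∫ x, gtr (b (r^(n+1))) (X j x) ∂μ)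
        = ∑ j ∈ Finset.Icc (H * r^(n+1+1) + 1) (H * r^(n+1+1) + q * r^(n+1)),
            (gtr (b (r^(n+1))) (X j ω) - ∫ x, gtr (b (r^(n+1))) (X j x) ∂μ)
          + ∑ j ∈ Finset.Icc (H * r^(n+1+1) + q * r^(n+1) + 1) (H * r^(n+1+1) + t),
            (gtr (b (r^(n+1))) (X j ω) - ∫ x, gtr (b (r^(n+1))) (X j x) ∂μ) :=
      sum_Icc_split _ (Nat.le_add_right _ _) (Nat.add_le_add_left hqN _)
    have habs : |∑ j ∈ Finset.Icc (H * r^(n+1+1) + 1) (H * r^(n+1+1) + t),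
          (gtr (b (r^(n+1))) (X j ω) - ∫ x, gtr (b (r^(n+1))) (X j x) ∂μ)|
        ≤ |∑ j ∈ Finset.Icc (H * r^(n+1+1) + 1) (H * r^(n+1+1) + q * r^(n+1)),
            (gtr (b (r^(n+1))) (X j ω) - ∫ x, gtr (b (r^(n+1))) (X j x) ∂μ)|
          + |∑ j ∈ Finset.Icc (H * r^(n+1+1) + q * r^(n+1) + 1) (H * r^(n+1+1) + t),
            (gtr (b (r^(n+1))) (X j ω) - ∫ x, gtr (b (r^(n+1))) (X j x) ∂μ)| := by
      rw [hsplit]; exact abs_add_le _ _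
    -- bound the first piece by the top A-term
    have hP1 : |∑ j ∈ Finset.Icc (H * r^(n+1+1) + 1) (H * r^(n+1+1) + q * r^(n+1)),
          (gtr (b (r^(n+1))) (X j ω) - ∫ x, gtr (b (r^(n+1))) (X j x) ∂μ)|
        ≤ fmax (r-2) (fun l =>
            |∑ j ∈ Finset.Icc (H * r^(n+1+1) + 1) (H * r^(n+1+1) + (l+1) * r^(n+1)),
              (gtr (b (r^(n+1))) (X j ω) - ∫ x, gtr (b (r^(n+1))) (X j x) ∂μ)|) := by
      rcases Nat.eq_zero_or_pos q with hq0 | hq1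
      · rw [hq0]
        simp only [zero_mul, add_zero]
        rw [Finset.Icc_eq_empty (by omega)]
        simpa using fmax_abs_nonneg (r-2) _
      · have := le_fmax (show q - 1 ≤ r - 2 by omega) (fun l =>
            |∑ j ∈ Finset.Icc (H * r^(n+1+1) + 1) (H * r^(n+1+1) + (l+1) * r^(n+1)),
              (gtr (b (r^(n+1))) (X j ω) - ∫ x, gtr (b (r^(n+1))) (X j x) ∂μ)|)
        simpa only [show q - 1 + 1 = q from by omega] using this
    -- bound the second piece via the induction hypothesis
    have hP2 : |∑ j ∈ Finset.Icc (H * r^(n+1+1) + q * r^(n+1) + 1) (H * r^(n+1+1) + t),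
          (gtr (b (r^(n+1))) (X j ω) - ∫ x, gtr (b (r^(n+1))) (X j x) ∂μ)|
        ≤ (∑ k ∈ Finset.Icc 1 (n+1), fmax (r-2) (fun l => fmax (r^(n+1+1-k) - 1) (fun i =>
             |∑ j ∈ Finset.Icc (1 + (H * r^(n+1+1-k) + i) * r^k)
                  ((H * r^(n+1+1-k) + i) * r^k + (l+1) * r^(k-1)),
                (gtr (b (r^(k-1))) (X j ω) - ∫ x, gtr (b (r^(k-1))) (X j x) ∂μ)|)))
          + (∑ k ∈ Finset.Icc 1 (n+1), fmax (r^(n+1+1-k) - 1) (fun i =>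
             |∑ j ∈ Finset.Icc (1 + (H * r^(n+1+1-k) + i) * r^k)
                  ((H * r^(n+1+1-k) + i) * r^k + r^k),
                (htr (b (r^(k-1))) (b (r^k)) (X j ω)
                  - ∫ x, htr (b (r^(k-1))) (b (r^k)) (X j x) ∂μ)|))
          + 2 * ∑ k ∈ Finset.Icc 1 (n+1), fmax (r^(n+1+1-k) - 1) (fun i =>
             ∑ j ∈ Finset.Icc (1 + (H * r^(n+1+1-k) + i) * r^k)
                  ((H * r^(n+1+1-k) + i) * r^k + r^k),
                ∫ x in {x | b (r^(k-1)) < |X j x|}, |X j x| ∂μ) := by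
      rcases Nat.eq_zero_or_pos s with hs0 | hs1
      · -- empty sum : the remainder is zero
        have htq : H * r^(n+1+1) + t = H * r^(n+1+1) + q * r^(n+1) := by
          rw [← hdm, hs0, add_zero]; ring
        rw [htq, Finset.Icc_eq_empty (by omega), Finset.sum_empty, abs_zero]
        have h1 : (0:ℝ) ≤ ∑ k ∈ Finset.Icc 1 (n+1), fmax (r-2) (fun l => fmax (r^(n+1+1-k) - 1) (fun i =>
             |∑ j ∈ Finset.Icc (1 + (H * r^(n+1+1-k) + i) * r^k)
                  ((H * r^(n+1+1-k) + i) * r^k + (l+1) * r^(k-1)),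
                (gtr (b (r^(k-1))) (X j ω) - ∫ x, gtr (b (r^(k-1))) (X j x) ∂μ)|)) :=
          Finset.sum_nonneg fun k _ => fmax_nonneg fun l => fmax_abs_nonneg _ _
        have h2 : (0:ℝ) ≤ ∑ k ∈ Finset.Icc 1 (n+1), fmax (r^(n+1+1-k) - 1) (fun i =>
             |∑ j ∈ Finset.Icc (1 + (H * r^(n+1+1-k) + i) * r^k)
                  ((H * r^(n+1+1-k) + i) * r^k + r^k),
                (htr (b (r^(k-1))) (b (r^k)) (X j ω)
                  - ∫ x, htr (b (r^(k-1))) (b (r^k)) (X j x) ∂μ)|) :=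
          Finset.sum_nonneg fun k _ => fmax_abs_nonneg _ _
        have h3 : (0:ℝ) ≤ ∑ k ∈ Finset.Icc 1 (n+1), fmax (r^(n+1+1-k) - 1) (fun i =>
             ∑ j ∈ Finset.Icc (1 + (H * r^(n+1+1-k) + i) * r^k)
                  ((H * r^(n+1+1-k) + i) * r^k + r^k),
                ∫ x in {x | b (r^(k-1)) < |X j x|}, |X j x| ∂μ) :=
          Finset.sum_nonneg fun k _ => fmax_nonneg fun i =>
            Finset.sum_nonneg fun j _ => integral_nonneg fun x => abs_nonneg _
        linarith
      · have htq : H * r^(n+1+1) + t = (H * r + q) * r^(n+1) + s := by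
          rw [← hdm, pow_succ]; ring
        have haq : H * r^(n+1+1) + q * r^(n+1) = (H * r + q) * r^(n+1) := by
          rw [pow_succ]; ring
        rw [htq, haq]
        refine le_trans (ih (H * r + q) s hs1 hs) ?_
        gcongr ?_ + ?_ + 2 * ?_
        · apply Finset.sum_le_sum
          intro k hk
          obtain ⟨hk1, hk2⟩ := Finset.mem_Icc.mp hk
          have hrp : r ^ (n+1+1-k) = r ^ (n+1-k) * r := by
            rw [show n+1+1-k = (n+1-k)+1 from by omega, pow_succ]
          apply fmax_le
          intro l hl
          refine le_trans ?_ (le_fmax hl _)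
          apply fmax_le
          intro i hi
          have hiP : i < r ^ (n+1-k) := by
            have h1 : 1 ≤ r ^ (n+1-k) := Nat.one_le_pow _ _ (by omega)
            omega
          have hi' : q * r^(n+1-k) + i ≤ r^(n+1+1-k) - 1 := by
            apply Nat.le_sub_one_of_lt
            rw [hrp]
            calc q * r^(n+1-k) + i < q * r^(n+1-k) + r^(n+1-k) :=
                  Nat.add_lt_add_left hiP _
              _ = (q+1) * r^(n+1-k) := by ring
              _ ≤ r * r^(n+1-k) := Nat.mul_le_mul_right _ (by omega)
              _ = r^(n+1-k) * r := Nat.mul_comm _ _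
          have he : ((H * r + q) * r^(n+1-k) + i) = H * r^(n+1+1-k) + (q * r^(n+1-k) + i) := by
            rw [hrp]; ring
          rw [he]
          exact le_fmax hi' (fun i =>
            |∑ j ∈ Finset.Icc (1 + (H * r^(n+1+1-k) + i) * r^k)
                ((H * r^(n+1+1-k) + i) * r^k + (l+1) * r^(k-1)),
              (gtr (b (r^(k-1))) (X j ω) - ∫ x, gtr (b (r^(k-1))) (X j x) ∂μ)|)
        · apply Finset.sum_le_sum
          intro k hk
          obtain ⟨hk1, hk2⟩ := Finset.mem_Icc.mp hk
          have hrp : r ^ (n+1+1-k) = r ^ (n+1-k) * r := by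
            rw [show n+1+1-k = (n+1-k)+1 from by omega, pow_succ]
          apply fmax_le
          intro i hi
          have hiP : i < r ^ (n+1-k) := by
            have h1 : 1 ≤ r ^ (n+1-k) := Nat.one_le_pow _ _ (by omega)
            omega
          have hi' : q * r^(n+1-k) + i ≤ r^(n+1+1-k) - 1 := by
            apply Nat.le_sub_one_of_lt
            rw [hrp]
            calc q * r^(n+1-k) + i < q * r^(n+1-k) + r^(n+1-k) :=
                  Nat.add_lt_add_left hiP _
              _ = (q+1) * r^(n+1-k) := by ring
              _ ≤ r * r^(n+1-k) := Nat.mul_le_mul_right _ (by omega)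
              _ = r^(n+1-k) * r := Nat.mul_comm _ _
          have he : ((H * r + q) * r^(n+1-k) + i) = H * r^(n+1+1-k) + (q * r^(n+1-k) + i) := by
            rw [hrp]; ring
          rw [he]
          exact le_fmax hi' (fun i =>
            |∑ j ∈ Finset.Icc (1 + (H * r^(n+1+1-k) + i) * r^k)
                ((H * r^(n+1+1-k) + i) * r^k + r^k),
              (htr (b (r^(k-1))) (b (r^k)) (X j ω)
                - ∫ x, htr (b (r^(k-1))) (b (r^k)) (X j x) ∂μ)|)
        · apply Finset.sum_le_sum
          intro k hk
          obtain ⟨hk1, hk2⟩ := Finset.mem_Icc.mp hk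
          have hrp : r ^ (n+1+1-k) = r ^ (n+1-k) * r := by
            rw [show n+1+1-k = (n+1-k)+1 from by omega, pow_succ]
          apply fmax_le
          intro i hi
          have hiP : i < r ^ (n+1-k) := by
            have h1 : 1 ≤ r ^ (n+1-k) := Nat.one_le_pow _ _ (by omega)
            omega
          have hi' : q * r^(n+1-k) + i ≤ r^(n+1+1-k) - 1 := by
            apply Nat.le_sub_one_of_lt
            rw [hrp]
            calc q * r^(n+1-k) + i < q * r^(n+1-k) + r^(n+1-k) :=
                  Nat.add_lt_add_left hiP _
              _ = (q+1) * r^(n+1-k) := by ring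
              _ ≤ r * r^(n+1-k) := Nat.mul_le_mul_right _ (by omega)
              _ = r^(n+1-k) * r := Nat.mul_comm _ _
          have he : ((H * r + q) * r^(n+1-k) + i) = H * r^(n+1+1-k) + (q * r^(n+1-k) + i) := by
            rw [hrp]; ring
          rw [he]
          exact le_fmax hi' (fun i =>
            ∑ j ∈ Finset.Icc (1 + (H * r^(n+1+1-k) + i) * r^k)
                ((H * r^(n+1+1-k) + i) * r^k + r^k),
              ∫ x in {x | b (r^(k-1)) < |X j x|}, |X j x| ∂μ)
    linarith [key, habs, hP1, hP2]

/-- pointwise decomposition bound for the truncated partial-sum maximum. -/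
theorem pointwise_truncated_max_bound
    (μ : Measure Ω) [IsProbabilityMeasure μ]
    (r : ℕ) (hr : 1 < r) (n : ℕ)
    (X : ℕ → Ω → ℝ)
    (hXmeas : ∀ j : ℕ, 1 ≤ j → Measurable (X j))
    (hXint : ∀ j : ℕ, 1 ≤ j → Integrable (X j) μ)
    (b : ℕ → ℝ) (hbpos : ∀ m : ℕ, 1 ≤ m → 0 < b m)
    (hbmono : ∀ m k : ℕ, 1 ≤ m → m ≤ k → b m ≤ b k) :
    ∀ ω : Ω,
      fmax (r ^ (n + 1) - 2) (fun m =>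
          |∑ j ∈ Finset.Icc 1 (m + 1),
            (gtr (b (r ^ (n + 1))) (X j ω) - ∫ x, gtr (b (r ^ (n + 1))) (X j x) ∂μ)|) ≤
        (∑ k ∈ Finset.Icc 1 (n + 1),
          fmax (r - 2) (fun l =>
            fmax (r ^ (n + 1 - k) - 1) (fun h =>
              |∑ j ∈ Finset.Icc (1 + h * r ^ k) (h * r ^ k + (l + 1) * r ^ (k - 1)),
                (gtr (b (r ^ (k - 1))) (X j ω) -
                  ∫ x, gtr (b (r ^ (k - 1))) (X j x) ∂μ)|)))
        + (∑ k ∈ Finset.Icc 1 (n + 1),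
            fmax (r ^ (n + 1 - k) - 1) (fun h =>
              |∑ j ∈ Finset.Icc (1 + h * r ^ k) (h * r ^ k + r ^ k),
                (htr (b (r ^ (k - 1))) (b (r ^ k)) (X j ω) -
                  ∫ x, htr (b (r ^ (k - 1))) (b (r ^ k)) (X j x) ∂μ)|))
        + 2 * ∑ k ∈ Finset.Icc 1 (n + 1),
            fmax (r ^ (n + 1 - k) - 1) (fun h =>
              ∑ j ∈ Finset.Icc (1 + h * r ^ k) (h * r ^ k + r ^ k),
                ∫ x in {x | b (r ^ (k - 1)) < |X j x|}, |X j x| ∂μ) := by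
  intro ω
  have hpow : 2 ≤ r ^ (n + 1) :=
    Nat.one_lt_pow (by omega) hr
  apply fmax_le
  intro m hm
  have := aux_bound μ r hr X hXmeas hXint b hbpos hbmono ω n 0 (m+1)
    (by omega) (by omega)
  simpa only [zero_mul, zero_add] using this
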